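/- In the asymptotic zone u_1 ≪ u_2 ≪ ... ≪ u_n ≪ v_n ≪ ... ≪ v_1, each summand U_k of the left-hand side of the hypergeometric identity tends to ∏_{i=1}^n ([qt;q]_{k_i}/[q;q]_{k_i}) · t^{(1/2)((n−1)k_1 + (n−3)k_2 + ... + (1−n)k_n)} · t^{−nK/2}. Formally: the limit of U_k(s^{a_1}u_1, ..., s^{a_n}u_n; s^{b_1}v_1,...,s^{b_n}v_n) as s → 0+, for exponents a_1 > a_2 > ... > a_n > b_n > ... > b_1, equals this expression, independent of u, v. -/

import Mathlib

open Finset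

/-- The symmetric q-Pochhammer symbol `[z;q]_k` in terms of fixed square roots
`s = q^{1/2}` and `w = z^{1/2}`. -/
noncomputable def symPoch (s w : ℂ) (k : ℤ) : ℂ :=
  if 0 ≤ k then ∏ j ∈ Finset.range k.toNat, (s ^ (j : ℤ) * w - s ^ (-(j : ℤ)) * w⁻¹)
  else (∏ j ∈ Finset.range (-k).toNat, (s ^ ((j : ℤ) + 1) * w - s ^ (-(j : ℤ) - 1) * w⁻¹))⁻¹

/-- Summand `U_k(u;v)` of the left-hand side of the hypergeometric identity, in the
square-root variables `s = q^{1/2}`, `r = t^{1/2}`, `w i = u_i^{1/2}`, `x a = v_a^{1/2}`. -/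
noncomputable def Ufun (n : ℕ) (s r : ℂ) (w x : Fin n → ℂ) (k : Fin n → ℕ) : ℂ :=
  (∏ i, symPoch s (s * r) (k i) / symPoch s s (k i)) *
  (∏ i, ∏ j ∈ ({i}ᶜ : Finset (Fin n)),
    symPoch s (r⁻¹ * s ^ (-(k j : ℤ)) * w i / w j) (k i) /
      symPoch s (s ^ (-(k j : ℤ)) * w i / w j) (k i)) *
  (∏ a, ∏ j, symPoch s (r * w j / x a) (k j) / symPoch s (w j / x a) (k j))

section Helpers
open Filter Topology

lemma symPoch_nat (s w : ℂ) (m : ℕ) :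
    symPoch s w (m : ℤ) = ∏ j ∈ Finset.range m, (s ^ (j : ℤ) * w - s ^ (-(j : ℤ)) * w⁻¹) := by
  simp [symPoch]

lemma factor_zero (s c1 c2 : ℂ) (hs : s ≠ 0) (h1 : c1 ≠ 0) (h2 : c2 ≠ 0) (j : ℕ) :
    Tendsto (fun z : ℂ =>
      (s ^ (j:ℤ) * (c1 * z) - s ^ (-(j:ℤ)) * (c1 * z)⁻¹) /
      (s ^ (j:ℤ) * (c2 * z) - s ^ (-(j:ℤ)) * (c2 * z)⁻¹))
      (𝓝[≠] (0:ℂ)) (𝓝 (c2 / c1)) := by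
  have hden : s ^ (j:ℤ) * c2 * (0:ℂ)^2 - s ^ (-(j:ℤ)) * c2⁻¹ ≠ 0 := by
    have h0 : (0:ℂ)^2 = 0 := by norm_num
    rw [h0, mul_zero, zero_sub]
    exact neg_ne_zero.mpr (mul_ne_zero (zpow_ne_zero _ hs) (inv_ne_zero h2))
  have key : Tendsto (fun z : ℂ =>
      (s ^ (j:ℤ) * c1 * z^2 - s ^ (-(j:ℤ)) * c1⁻¹) /
      (s ^ (j:ℤ) * c2 * z^2 - s ^ (-(j:ℤ)) * c2⁻¹)) (𝓝 (0:ℂ)) (𝓝 (c2 / c1)) := by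
    have hc : ContinuousAt (fun z : ℂ =>
        (s ^ (j:ℤ) * c1 * z^2 - s ^ (-(j:ℤ)) * c1⁻¹) /
        (s ^ (j:ℤ) * c2 * z^2 - s ^ (-(j:ℤ)) * c2⁻¹)) 0 :=
      ContinuousAt.div (by fun_prop) (by fun_prop) hden
    have heq : (s ^ (j:ℤ) * c1 * (0:ℂ)^2 - s ^ (-(j:ℤ)) * c1⁻¹) /
        (s ^ (j:ℤ) * c2 * (0:ℂ)^2 - s ^ (-(j:ℤ)) * c2⁻¹) = c2 / c1 := by
      have : s ^ (-(j:ℤ)) ≠ 0 := zpow_ne_zero _ hs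
      field_simp
      ring
    have h0 : (0:ℂ)^2 = 0 := by norm_num
    have := hc.tendsto
    rw [heq] at this
    exact this
  refine (key.mono_left nhdsWithin_le_nhds).congr' ?_
  filter_upwards [self_mem_nhdsWithin] with z hz
  have hz0 : z ≠ 0 := hz
  have e1 : s ^ (j:ℤ) * c1 * z^2 - s ^ (-(j:ℤ)) * c1⁻¹
      = (s ^ (j:ℤ) * (c1 * z) - s ^ (-(j:ℤ)) * (c1 * z)⁻¹) * z := by
    field_simp
  have e2 : s ^ (j:ℤ) * c2 * z^2 - s ^ (-(j:ℤ)) * c2⁻¹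
      = (s ^ (j:ℤ) * (c2 * z) - s ^ (-(j:ℤ)) * (c2 * z)⁻¹) * z := by
    field_simp
  rw [e1, e2, mul_div_mul_right _ _ hz0]

lemma factor_inv (s c1 c2 : ℂ) (hs : s ≠ 0) (h1 : c1 ≠ 0) (h2 : c2 ≠ 0) (j : ℕ) :
    Tendsto (fun y : ℂ =>
      (s ^ (j:ℤ) * (c1 * y⁻¹) - s ^ (-(j:ℤ)) * (c1 * y⁻¹)⁻¹) /
      (s ^ (j:ℤ) * (c2 * y⁻¹) - s ^ (-(j:ℤ)) * (c2 * y⁻¹)⁻¹))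
      (𝓝[≠] (0:ℂ)) (𝓝 (c1 / c2)) := by
  have hden : s ^ (j:ℤ) * c2 - s ^ (-(j:ℤ)) * c2⁻¹ * (0:ℂ)^2 ≠ 0 := by
    have h0 : (0:ℂ)^2 = 0 := by norm_num
    rw [h0, mul_zero, sub_zero]
    exact mul_ne_zero (zpow_ne_zero _ hs) h2
  have key : Tendsto (fun y : ℂ =>
      (s ^ (j:ℤ) * c1 - s ^ (-(j:ℤ)) * c1⁻¹ * y^2) /
      (s ^ (j:ℤ) * c2 - s ^ (-(j:ℤ)) * c2⁻¹ * y^2)) (𝓝 (0:ℂ)) (𝓝 (c1 / c2)) := by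
    have hc : ContinuousAt (fun y : ℂ =>
        (s ^ (j:ℤ) * c1 - s ^ (-(j:ℤ)) * c1⁻¹ * y^2) /
        (s ^ (j:ℤ) * c2 - s ^ (-(j:ℤ)) * c2⁻¹ * y^2)) 0 :=
      ContinuousAt.div (by fun_prop) (by fun_prop) hden
    have heq : (s ^ (j:ℤ) * c1 - s ^ (-(j:ℤ)) * c1⁻¹ * (0:ℂ)^2) /
        (s ^ (j:ℤ) * c2 - s ^ (-(j:ℤ)) * c2⁻¹ * (0:ℂ)^2) = c1 / c2 := by
      have hz : s ^ (j:ℤ) ≠ 0 := zpow_ne_zero _ hs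
      field_simp
      ring
    have := hc.tendsto
    rw [heq] at this
    exact this
  refine (key.mono_left nhdsWithin_le_nhds).congr' ?_
  filter_upwards [self_mem_nhdsWithin] with y hy
  have hy0 : y ≠ 0 := hy
  have e1 : s ^ (j:ℤ) * c1 - s ^ (-(j:ℤ)) * c1⁻¹ * y^2
      = (s ^ (j:ℤ) * (c1 * y⁻¹) - s ^ (-(j:ℤ)) * (c1 * y⁻¹)⁻¹) * y := by
    field_simp
  have e2 : s ^ (j:ℤ) * c2 - s ^ (-(j:ℤ)) * c2⁻¹ * y^2
      = (s ^ (j:ℤ) * (c2 * y⁻¹) - s ^ (-(j:ℤ)) * (c2 * y⁻¹)⁻¹) * y := by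
    field_simp
  rw [e1, e2, mul_div_mul_right _ _ hy0]

lemma ratio_zero (s c1 c2 : ℂ) (hs : s ≠ 0) (h1 : c1 ≠ 0) (h2 : c2 ≠ 0) (m : ℕ) :
    Tendsto (fun z : ℂ => symPoch s (c1 * z) (m:ℤ) / symPoch s (c2 * z) (m:ℤ))
      (𝓝[≠] (0:ℂ)) (𝓝 ((c2 / c1) ^ m)) := by
  have key := tendsto_finset_prod (Finset.range m) (fun j _ => factor_zero s c1 c2 hs h1 h2 j)
  have hv : ∏ _j ∈ Finset.range m, (c2 / c1) = (c2 / c1) ^ m := by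
    simp [div_pow]
  rw [← hv]
  refine key.congr fun z => ?_
  rw [Finset.prod_div_distrib, ← symPoch_nat, ← symPoch_nat]

lemma ratio_inv (s c1 c2 : ℂ) (hs : s ≠ 0) (h1 : c1 ≠ 0) (h2 : c2 ≠ 0) (m : ℕ) :
    Tendsto (fun y : ℂ => symPoch s (c1 * y⁻¹) (m:ℤ) / symPoch s (c2 * y⁻¹) (m:ℤ))
      (𝓝[≠] (0:ℂ)) (𝓝 ((c1 / c2) ^ m)) := by
  have key := tendsto_finset_prod (Finset.range m) (fun j _ => factor_inv s c1 c2 hs h1 h2 j)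
  have hv : ∏ _j ∈ Finset.range m, (c1 / c2) = (c1 / c2) ^ m := by
    simp [div_pow]
  rw [← hv]
  refine key.congr fun y => ?_
  rw [Finset.prod_div_distrib, ← symPoch_nat, ← symPoch_nat]

lemma base_tendsto (e : ℝ) (he : 0 < e) :
    Tendsto (fun σ : ℝ => (σ:ℂ) ^ (e:ℂ)) (𝓝[>] (0:ℝ)) (𝓝[≠] (0:ℂ)) := by
  rw [tendsto_nhdsWithin_iff]
  constructor
  · have h0 : Tendsto (fun σ : ℝ => σ ^ e) (𝓝[>] (0:ℝ)) (𝓝 (0:ℝ)) := by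
      have hc : ContinuousAt (fun σ : ℝ => σ ^ e) 0 :=
        Real.continuousAt_rpow_const 0 e (Or.inr he.le)
      have := hc.tendsto.mono_left (nhdsWithin_le_nhds (s := Set.Ioi (0:ℝ)))
      simpa [Real.zero_rpow he.ne'] using this
    have h1 : Tendsto (fun σ : ℝ => ((σ ^ e : ℝ) : ℂ)) (𝓝[>] (0:ℝ)) (𝓝 (0:ℂ)) := by
      have := (Complex.continuous_ofReal.tendsto (0:ℝ)).comp h0
      exact this
    refine h1.congr' ?_
    filter_upwards [self_mem_nhdsWithin] with σ hσ
    exact Complex.ofReal_cpow (le_of_lt hσ) e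
  · filter_upwards [self_mem_nhdsWithin] with σ hσ
    have : (σ:ℂ) ≠ 0 := by
      exact_mod_cast ne_of_gt hσ
    simp [Complex.cpow_eq_zero_iff, this]

lemma pair_pos (s c1 c2 : ℂ) (hs : s ≠ 0) (h1 : c1 ≠ 0) (h2 : c2 ≠ 0) (m : ℕ)
    (e : ℝ) (he : 0 < e) :
    Tendsto (fun σ : ℝ => symPoch s (c1 * (σ:ℂ) ^ (e:ℂ)) (m:ℤ) /
        symPoch s (c2 * (σ:ℂ) ^ (e:ℂ)) (m:ℤ))
      (𝓝[>] (0:ℝ)) (𝓝 ((c2 / c1) ^ m)) :=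
  (ratio_zero s c1 c2 hs h1 h2 m).comp (base_tendsto e he)

lemma pair_neg (s c1 c2 : ℂ) (hs : s ≠ 0) (h1 : c1 ≠ 0) (h2 : c2 ≠ 0) (m : ℕ)
    (e : ℝ) (he : e < 0) :
    Tendsto (fun σ : ℝ => symPoch s (c1 * (σ:ℂ) ^ (e:ℂ)) (m:ℤ) /
        symPoch s (c2 * (σ:ℂ) ^ (e:ℂ)) (m:ℤ))
      (𝓝[>] (0:ℝ)) (𝓝 ((c1 / c2) ^ m)) := by
  have T := (ratio_inv s c1 c2 hs h1 h2 m).comp (base_tendsto (-e) (by linarith))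
  refine T.congr fun σ => ?_
  have : ((σ:ℂ) ^ (((-e : ℝ)):ℂ))⁻¹ = (σ:ℂ) ^ (e:ℂ) := by
    rw [show (((-e : ℝ)):ℂ) = -(e:ℂ) by push_cast; ring, Complex.cpow_neg, inv_inv]
  simp only [Function.comp]
  rw [this]

lemma scale_eq (C wi wj : ℂ) (hwj : wj ≠ 0) (σ : ℝ) (hσ : 0 < σ) (p q : ℝ) :
    C * ((σ:ℂ) ^ ((p:ℝ):ℂ) * wi) / ((σ:ℂ) ^ ((q:ℝ):ℂ) * wj)
      = (C * wi / wj) * (σ:ℂ) ^ (((p - q : ℝ)):ℂ) := by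
  have hσ0 : (σ:ℂ) ≠ 0 := by exact_mod_cast ne_of_gt hσ
  have hp : (σ:ℂ) ^ ((p:ℝ):ℂ) ≠ 0 := by simp [Complex.cpow_eq_zero_iff, hσ0]
  have hq : (σ:ℂ) ^ ((q:ℝ):ℂ) ≠ 0 := by simp [Complex.cpow_eq_zero_iff, hσ0]
  have hsub : (((p - q : ℝ)):ℂ) = ((p:ℝ):ℂ) - ((q:ℝ):ℂ) := by push_cast; ring
  rw [hsub, Complex.cpow_sub _ _ hσ0]
  field_simp

lemma scale_eq' (wi wj : ℂ) (hwj : wj ≠ 0) (σ : ℝ) (hσ : 0 < σ) (p q : ℝ) :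
    (σ:ℂ) ^ ((p:ℝ):ℂ) * wi / ((σ:ℂ) ^ ((q:ℝ):ℂ) * wj)
      = (wi / wj) * (σ:ℂ) ^ (((p - q : ℝ)):ℂ) := by
  have := scale_eq 1 wi wj hwj σ hσ p q
  simpa using this

lemma prod_zpow' (r : ℂ) (hr : r ≠ 0) {ι : Type*} (t : Finset ι) (f : ι → ℤ) :
    ∏ i ∈ t, r ^ f i = r ^ (∑ i ∈ t, f i) := by
  induction t using Finset.cons_induction with
  | empty => simp
  | cons i s hi ih => rw [Finset.prod_cons, Finset.sum_cons, zpow_add₀ hr, ih]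

lemma sum_pm (n : ℕ) (i : Fin n) (m : ℤ) :
    (∑ j ∈ ({i}ᶜ : Finset (Fin n)), (if i < j then m else -m))
      = ((n:ℤ) - 1 - 2 * (i:ℤ)) * m := by
  rw [Finset.sum_ite]
  have h1 : ({i}ᶜ : Finset (Fin n)).filter (fun j => i < j) = Finset.Ioi i := by
    ext j
    simp only [Finset.mem_filter, Finset.mem_compl, Finset.mem_singleton, Finset.mem_Ioi]
    constructor
    · exact fun h => h.2
    · exact fun h => ⟨(ne_of_gt h), h⟩
  have h2 : ({i}ᶜ : Finset (Fin n)).filter (fun j => ¬ i < j) = Finset.Iio i := by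
    ext j
    simp only [Finset.mem_filter, Finset.mem_compl, Finset.mem_singleton, Finset.mem_Iio,
      Fin.lt_def, not_lt, Fin.ext_iff]
    omega
  rw [h1, h2, Finset.sum_const, Finset.sum_const, Fin.card_Ioi, Fin.card_Iio]
  have hi := i.isLt
  have hcast : ((n - 1 - (i:ℕ) : ℕ) : ℤ) = (n:ℤ) - 1 - (i:ℕ) := by omega
  rw [nsmul_eq_mul, nsmul_eq_mul, hcast]
  push_cast
  ring

lemma L2_eq (n : ℕ) (r : ℂ) (hr : r ≠ 0) (k : Fin n → ℕ) :
    (∏ i, ∏ j ∈ ({i}ᶜ : Finset (Fin n)),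
        (if i < j then r ^ (k i) else (r ^ (k i))⁻¹))
      = r ^ (∑ i : Fin n, ((n:ℤ) - 1 - 2 * (i:ℤ)) * (k i : ℤ)) := by
  have step : ∀ i : Fin n, ∀ j ∈ ({i}ᶜ : Finset (Fin n)),
      (if i < j then r ^ (k i) else (r ^ (k i))⁻¹)
        = r ^ (if i < j then ((k i : ℤ)) else -(k i : ℤ)) := by
    intro i j _
    split_ifs with h
    · rw [zpow_natCast]
    · rw [zpow_neg, zpow_natCast]
  rw [← prod_zpow' r hr]
  refine Finset.prod_congr rfl fun i _ => ?_
  rw [Finset.prod_congr rfl (step i), prod_zpow' r hr, sum_pm]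

lemma L3_eq (n : ℕ) (r : ℂ) (hr : r ≠ 0) (k : Fin n → ℕ) :
    (∏ _a : Fin n, ∏ j : Fin n, (r ^ (k j))⁻¹)
      = r ^ (-(n:ℤ) * ∑ i : Fin n, (k i : ℤ)) := by
  have hin : ∏ j : Fin n, (r ^ (k j))⁻¹ = r ^ (-∑ i : Fin n, (k i : ℤ)) := by
    have : ∀ j : Fin n, (r ^ (k j))⁻¹ = r ^ (-(k j : ℤ)) := by
      intro j; rw [zpow_neg, zpow_natCast]
    simp_rw [this]
    rw [prod_zpow' r hr, Finset.sum_neg_distrib]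
  rw [Finset.prod_const, hin, Finset.card_univ, Fintype.card_fin, ← zpow_natCast (r ^ _),
    ← zpow_mul]
  congr 1
  ring

end Helpers

/-- Asymptotics of `U_k` in the zone `u₁ ≪ u₂ ≪ … ≪ u_n ≪ v_n ≪ … ≪ v₁`:
along the scaling `u_i ↦ σ^{a_i} u_i`, `v_a ↦ σ^{b_a} v_a`, `σ → 0⁺` with
`a₁ > … > a_n > b_n > … > b₁`, the summand `U_k` tends to
`∏_i [qt;q]_{k_i}/[q;q]_{k_i} · t^{(1/2)Σ_i (n+1-2i) k_i} · t^{-nK/2}`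
(written via `r = t^{1/2}`), independently of `u, v`. -/
theorem U_asymptotics (n : ℕ) (s r : ℂ) (hq : ‖s ^ 2‖ < 1)
    (hs : s ≠ 0) (hr : r ≠ 0)
    (w x : Fin n → ℂ) (hw : ∀ i, w i ≠ 0) (hx : ∀ a, x a ≠ 0)
    (k : Fin n → ℕ) (a b : Fin n → ℝ)
    (ha : ∀ i j : Fin n, i < j → a j < a i)
    (hb : ∀ i j : Fin n, i < j → b i < b j)
    (hab : ∀ i j : Fin n, b i < a j) :
    Filter.Tendsto
      (fun σ : ℝ => Ufun n s r
        (fun i => ((σ : ℂ) ^ (((a i / 2 : ℝ)) : ℂ)) * w i)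
        (fun i => ((σ : ℂ) ^ (((b i / 2 : ℝ)) : ℂ)) * x i) k)
      (nhdsWithin 0 (Set.Ioi 0))
      (nhds ((∏ i, symPoch s (s * r) (k i) / symPoch s s (k i)) *
        r ^ (∑ i : Fin n, ((n : ℤ) - 1 - 2 * (i : ℤ)) * (k i : ℤ)) *
        r ^ (-(n : ℤ) * ∑ i : Fin n, (k i : ℤ)))) := by
  rw [← L2_eq n r hr k, ← L3_eq n r hr k]
  simp only [Ufun]
  refine Filter.Tendsto.mul (Filter.Tendsto.mul tendsto_const_nhds ?_) ?_
  · refine tendsto_finset_prod _ fun i _ => ?_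
    refine tendsto_finset_prod _ fun j hj => ?_
    have hij : j ≠ i := by simpa using hj
    have hc2 : s ^ (-(k j : ℤ)) * w i / w j ≠ 0 :=
      div_ne_zero (mul_ne_zero (zpow_ne_zero _ hs) (hw i)) (hw j)
    have hc1 : r⁻¹ * s ^ (-(k j : ℤ)) * w i / w j ≠ 0 :=
      div_ne_zero (mul_ne_zero (mul_ne_zero (inv_ne_zero hr) (zpow_ne_zero _ hs)) (hw i)) (hw j)
    rcases hij.symm.lt_or_gt with hlt | hlt
    · -- i < j : exponent positive
      rw [if_pos hlt]
      have he : 0 < a i / 2 - a j / 2 := by have := ha i j hlt; linarith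
      have T := pair_pos s (r⁻¹ * s ^ (-(k j : ℤ)) * w i / w j)
        (s ^ (-(k j : ℤ)) * w i / w j) hs hc1 hc2 (k i) (a i / 2 - a j / 2) he
      have hqr : (s ^ (-(k j : ℤ)) * w i / w j) / (r⁻¹ * s ^ (-(k j : ℤ)) * w i / w j) = r := by
        have hre : r⁻¹ * s ^ (-(k j : ℤ)) * w i / w j
            = (s ^ (-(k j : ℤ)) * w i / w j) * r⁻¹ := by ring
        rw [hre, div_mul_eq_div_div, div_self hc2, one_div, inv_inv]
      rw [hqr] at T
      refine T.congr' ?_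
      filter_upwards [self_mem_nhdsWithin] with σ hσ
      rw [scale_eq (r⁻¹ * s ^ (-(k j : ℤ))) (w i) (w j) (hw j) σ hσ (a i / 2) (a j / 2),
          scale_eq (s ^ (-(k j : ℤ))) (w i) (w j) (hw j) σ hσ (a i / 2) (a j / 2)]
    · -- j < i : exponent negative
      rw [if_neg (not_lt.mpr hlt.le)]
      have he : a i / 2 - a j / 2 < 0 := by have := ha j i hlt; linarith
      have T := pair_neg s (r⁻¹ * s ^ (-(k j : ℤ)) * w i / w j)
        (s ^ (-(k j : ℤ)) * w i / w j) hs hc1 hc2 (k i) (a i / 2 - a j / 2) he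
      have hqr : (r⁻¹ * s ^ (-(k j : ℤ)) * w i / w j) / (s ^ (-(k j : ℤ)) * w i / w j) = r⁻¹ := by
        have hre : r⁻¹ * s ^ (-(k j : ℤ)) * w i / w j
            = (s ^ (-(k j : ℤ)) * w i / w j) * r⁻¹ := by ring
        rw [hre, mul_comm, mul_div_assoc, div_self hc2, mul_one]
      rw [hqr, inv_pow] at T
      refine T.congr' ?_
      filter_upwards [self_mem_nhdsWithin] with σ hσ
      rw [scale_eq (r⁻¹ * s ^ (-(k j : ℤ))) (w i) (w j) (hw j) σ hσ (a i / 2) (a j / 2),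
          scale_eq (s ^ (-(k j : ℤ))) (w i) (w j) (hw j) σ hσ (a i / 2) (a j / 2)]
  · refine tendsto_finset_prod _ fun i _ => ?_
    refine tendsto_finset_prod _ fun j _ => ?_
    have hc2 : w j / x i ≠ 0 := div_ne_zero (hw j) (hx i)
    have hc1 : r * w j / x i ≠ 0 := div_ne_zero (mul_ne_zero hr (hw j)) (hx i)
    have he : 0 < a j / 2 - b i / 2 := by have := hab i j; linarith
    have T := pair_pos s (r * w j / x i) (w j / x i) hs hc1 hc2 (k j)
      (a j / 2 - b i / 2) he
    have hqr : (w j / x i) / (r * w j / x i) = r⁻¹ := by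
      have hre : r * w j / x i = (w j / x i) * r := by ring
      rw [hre, div_mul_eq_div_div, div_self hc2, one_div]
    rw [hqr, inv_pow] at T
    refine T.congr' ?_
    filter_upwards [self_mem_nhdsWithin] with σ hσ
    rw [scale_eq r (w j) (x i) (hx i) σ hσ (a j / 2) (b i / 2),
        scale_eq' (w j) (x i) (hx i) σ hσ (a j / 2) (b i / 2)]
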